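/- Let 𝔹 ⊆ Bor(C) be a balanced Boolean algebra written as an increasing union of finite subalgebras 𝔹_n, let (m_n) be a strictly increasing sequence of naturals, and let {G_n : n ∈ ℕ} ⊆ 𝔹 be an antichain such that for all k ∈ ℕ and all n ≤ k, the family ℱ(𝔹_n, ⋃_{i≤k} G_i) is (m_n, 2^{-n})-balanced. Then with G = ⋃_{n∈ℕ} G_n, the Boolean algebra generated by 𝔹 ∪ {G} is balanced. -/

import Mathlib

open MeasureTheory Set Filter Topology
open scoped ENNReal

noncomputable section

/-- The Cantor set `{-1,1}^ℕ`, coded with `Bool` (`true ↔ 1`, `false ↔ -1`). -/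
abbrev Cantor : Type := ℕ → Bool

/-- `δ_n(x) = x_n ∈ {-1,1}`. -/
def delta (n : ℕ) (x : Cantor) : ℝ := if x n then 1 else -1

/-- The cylinder `⟨s⟩ = {x : x↾m = s}`. -/
def cyl {m : ℕ} (s : Fin m → Bool) : Set Cantor := {x | ∀ i : Fin m, x i.1 = s i}

/-- `φ_n(A) = ∫_A δ_n dμ`. -/
def phi (μ : Measure Cantor) (n : ℕ) (A : Set Cantor) : ℝ := ∫ x in A, delta n x ∂μ

/-- `μ` is the Haar (fair-coin product) measure on the Cantor set:
every cylinder of length `m` has measure `2^{-m}`. -/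
def IsHaar (μ : Measure Cantor) : Prop :=
  ∀ (m : ℕ) (s : Fin m → Bool), μ (cyl s) = (2 : ℝ≥0∞)⁻¹ ^ m

/-- `A` is `(t,ε)`-semibalanced: `|φ_r(A)| < ε/r` for all `r > t`. -/
def Semibalanced (μ : Measure Cantor) (t : ℕ) (ε : ℝ) (A : Set Cantor) : Prop :=
  ∀ r : ℕ, t < r → |phi μ r A| < ε / (r : ℝ)

/-- `A` is `(m,ε)`-balanced. -/
def BalancedAt (μ : Measure Cantor) (m : ℕ) (ε : ℝ) (A : Set Cantor) : Prop :=
  ∀ s : Fin m → Bool,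
    ((μ (A ∩ cyl s)).toReal / (μ (cyl s)).toReal < ε / (m : ℝ) ∨
      (μ (cyl s \ A)).toReal / (μ (cyl s)).toReal < ε / (m : ℝ)) ∧
    ∀ r : ℕ, m < r → |phi μ r (A ∩ cyl s)| / (μ (cyl s)).toReal < ε / (r : ℝ)

/-- `A` is `(m,t,ε)`-balanced. -/
def BalancedAtT (μ : Measure Cantor) (m t : ℕ) (ε : ℝ) (A : Set Cantor) : Prop :=
  ∀ s : Fin m → Bool,
    ((μ (A ∩ cyl s)).toReal / (μ (cyl s)).toReal < ε / (m : ℝ) ∨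
      (μ (cyl s \ A)).toReal / (μ (cyl s)).toReal < ε / (m : ℝ)) ∧
    ∀ r : ℕ, m < r → r ≤ t → |phi μ r (A ∩ cyl s)| / (μ (cyl s)).toReal < ε / (r : ℝ)

/-- The Boolean algebra of subsets of the Cantor set generated by a family `S`. -/
def genAlgebra (S : Set (Set Cantor)) : Set (Set Cantor) :=
  ⋂₀ {T : Set (Set Cantor) | S ⊆ T ∧ Set.univ ∈ T ∧ (∀ A ∈ T, Aᶜ ∈ T) ∧
      ∀ A ∈ T, ∀ B ∈ T, A ∪ B ∈ T}

/-- A family of Borel sets is balanced: every finite subfamily is `(m,ε)`-balanced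
for some `m`, for each `ε > 0`. -/
def BalancedFamily (μ : Measure Cantor) (B : Set (Set Cantor)) : Prop :=
  ∀ 𝒜 : Set (Set Cantor), 𝒜 ⊆ B → 𝒜.Finite → ∀ ε : ℝ, 0 < ε →
    ∃ m : ℕ, ∀ A ∈ 𝒜, BalancedAt μ m ε A


lemma measurable_delta (n : ℕ) : Measurable (delta n) := by
  unfold delta
  have hs : MeasurableSet {x : Cantor | x n = true} := by
    have : {x : Cantor | x n = true} = (fun f : Cantor => f n) ⁻¹' {true} := rfl
    rw [this]
    exact measurable_pi_apply n (measurableSet_singleton true)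
  exact Measurable.ite hs measurable_const measurable_const

lemma abs_delta_le (n : ℕ) (x : Cantor) : ‖delta n x‖ ≤ 1 := by
  rw [Real.norm_eq_abs]; unfold delta; split <;> norm_num

lemma integrable_delta (μ : Measure Cantor) [IsFiniteMeasure μ] (n : ℕ) :
    Integrable (delta n) μ :=
  (integrable_const 1).mono' (measurable_delta n).aestronglyMeasurable
    (ae_of_all _ (abs_delta_le n))

lemma measurableSet_cyl {m : ℕ} (s : Fin m → Bool) : MeasurableSet (cyl s) := by
  have : cyl s = ⋂ i : Fin m, (fun x : Cantor => x i.1) ⁻¹' {s i} := by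
    ext x; simp [cyl]
  rw [this]
  exact MeasurableSet.iInter fun i => (measurable_pi_apply i.1) (by trivial)

lemma abs_phi_le (μ : Measure Cantor) [IsFiniteMeasure μ] (r : ℕ) (U : Set Cantor) :
    |phi μ r U| ≤ (μ U).toReal := by
  rw [phi, ← Real.norm_eq_abs]
  calc ‖∫ x in U, delta r x ∂μ‖ ≤ 1 * (μ U).toReal :=
        norm_setIntegral_le_of_norm_le_const (measure_lt_top μ U)
          (fun x _ => abs_delta_le r x)
    _ = (μ U).toReal := one_mul _

lemma phi_union (μ : Measure Cantor) [IsFiniteMeasure μ] (r : ℕ) {U V : Set Cantor}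
    (h : Disjoint U V) (hV : MeasurableSet V) :
    phi μ r (U ∪ V) = phi μ r U + phi μ r V :=
  setIntegral_union h hV (integrable_delta μ r).integrableOn (integrable_delta μ r).integrableOn

lemma abs_phi_sub_le (μ : Measure Cantor) [IsFiniteMeasure μ] (r : ℕ) {U V : Set Cantor}
    (hU : MeasurableSet U) (hV : MeasurableSet V) :
    |phi μ r U - phi μ r V| ≤ (μ (U \ V)).toReal + (μ (V \ U)).toReal := by
  have eU : phi μ r U = phi μ r (U ∩ V) + phi μ r (U \ V) := by
    rw [← phi_union μ r (disjoint_sdiff_self_right.mono_left inter_subset_right) (hU.diff hV),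
      inter_union_diff]
  have eV : phi μ r V = phi μ r (U ∩ V) + phi μ r (V \ U) := by
    rw [← phi_union μ r (disjoint_sdiff_self_right.mono_left inter_subset_left) (hV.diff hU),
      inter_comm, inter_union_diff]
  have h3 : phi μ r U - phi μ r V = phi μ r (U \ V) - phi μ r (V \ U) := by
    rw [eU, eV]; ring
  rw [h3]
  exact (abs_sub _ _).trans (add_le_add (abs_phi_le μ r _) (abs_phi_le μ r _))

lemma genAlgebra_sub (B : Set (Set Cantor)) (hu : Set.univ ∈ B)
    (hc : ∀ A ∈ B, Aᶜ ∈ B) (hun : ∀ A ∈ B, ∀ A' ∈ B, A ∪ A' ∈ B) (Gs : Set Cantor) :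
    genAlgebra (B ∪ {Gs}) ⊆ {X | ∃ A₁ ∈ B, ∃ A₂ ∈ B, X = (A₁ ∩ Gs) ∪ (A₂ \ Gs)} := by
  intro X hX
  refine hX _ ⟨?_, ⟨Set.univ, hu, Set.univ, hu, (inter_union_diff _ _).symm⟩,
    ?_, ?_⟩
  · rintro A (hA | rfl)
    · exact ⟨A, hA, A, hA, (inter_union_diff _ _).symm⟩
    · refine ⟨Set.univ, hu, ∅, ?_, by simp⟩
      have := hc _ hu; simpa using this
  · rintro A ⟨A₁, h₁, A₂, h₂, rfl⟩
    exact ⟨A₁ᶜ, hc _ h₁, A₂ᶜ, hc _ h₂, by ext x; by_cases h : x ∈ Gs <;> simp [h]⟩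
  · rintro A ⟨A₁, h₁, A₂, h₂, rfl⟩ A' ⟨A₁', h₁', A₂', h₂', rfl⟩
    refine ⟨A₁ ∪ A₁', hun _ h₁ _ h₁', A₂ ∪ A₂', hun _ h₂ _ h₂', ?_⟩
    ext x; by_cases h : x ∈ Gs <;> simp [h] <;> tauto


/-- Extending a balanced algebra `𝔹 = ⋃ₙ 𝔹ₙ` by `G = ⋃ₙ Gₙ`, where `(Gₙ)` is an
antichain in `𝔹` such that each family `ℱ(𝔹ₙ, ⋃_{i≤k} G_i)` is `(mₙ, 2⁻ⁿ)`-balanced,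
yields a balanced algebra. -/
theorem stmt15 (μ : Measure Cantor) [IsProbabilityMeasure μ] (hμ : IsHaar μ)
    (B : Set (Set Cantor)) (Bn : ℕ → Set (Set Cantor))
    (hBn_fin : ∀ n, (Bn n).Finite) (hBn_mono : Monotone Bn)
    (hBn_alg : ∀ n, Set.univ ∈ Bn n ∧ (∀ A ∈ Bn n, Aᶜ ∈ Bn n) ∧
      ∀ A ∈ Bn n, ∀ A' ∈ Bn n, A ∪ A' ∈ Bn n)
    (hBunion : B = ⋃ n, Bn n)
    (hmeas : ∀ A ∈ B, MeasurableSet A)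
    (hbalB : BalancedFamily μ B)
    (m : ℕ → ℕ) (hm : StrictMono m)
    (G : ℕ → Set Cantor) (hG : ∀ n, G n ∈ B)
    (hGd : Pairwise (Function.onFun Disjoint G))
    (hkey : ∀ k : ℕ, ∀ n : ℕ, n ≤ k → ∀ A ∈ Bn n,
      BalancedAt μ (m n) ((2 : ℝ)⁻¹ ^ n) (A ∩ ⋃ i ∈ Finset.range (k + 1), G i) ∧
      BalancedAt μ (m n) ((2 : ℝ)⁻¹ ^ n) (A \ ⋃ i ∈ Finset.range (k + 1), G i)) :
    BalancedFamily μ (genAlgebra (B ∪ {⋃ n, G n})) := by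
  classical
  have hBuniv : Set.univ ∈ B := by
    rw [hBunion]; exact mem_iUnion.2 ⟨0, (hBn_alg 0).1⟩
  have hBc : ∀ A ∈ B, Aᶜ ∈ B := by
    intro A hA; rw [hBunion] at hA ⊢
    obtain ⟨n, hn⟩ := mem_iUnion.1 hA
    exact mem_iUnion.2 ⟨n, (hBn_alg n).2.1 A hn⟩
  have hBu : ∀ A ∈ B, ∀ A' ∈ B, A ∪ A' ∈ B := by
    intro A hA A' hA'; rw [hBunion] at hA hA' ⊢
    obtain ⟨n, hn⟩ := mem_iUnion.1 hA; obtain ⟨n', hn'⟩ := mem_iUnion.1 hA'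
    exact mem_iUnion.2 ⟨max n n', (hBn_alg _).2.2 _ (hBn_mono (le_max_left _ _) hn) _
      (hBn_mono (le_max_right _ _) hn')⟩
  set Gs : Set Cantor := ⋃ n, G n with hGsdef
  have hGmeas : ∀ n, MeasurableSet (G n) := fun n => hmeas _ (hG n)
  have hGsmeas : MeasurableSet Gs := MeasurableSet.iUnion hGmeas
  set Gk : ℕ → Set Cantor := fun k => ⋃ i ∈ Finset.range (k + 1), G i with hGkdef
  have hmGk : ∀ k, MeasurableSet (Gk k) :=
    fun k => (Finset.range (k + 1)).measurableSet_biUnion (fun i _ => hGmeas i)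
  have hGkGs : ∀ k, Gk k ⊆ Gs := fun k => iUnion₂_subset fun i _ => subset_iUnion G i
  -- tail measure tends to 0
  have htail : Tendsto (fun k => (μ (Gs \ Gk k)).toReal) atTop (𝓝 0) := by
    have hanti : Antitone fun k => Gs \ Gk k := by
      intro k l hkl
      apply diff_subset_diff_right
      exact iUnion₂_subset fun i hi =>
        subset_iUnion₂ (s := fun i (_ : i ∈ Finset.range (l + 1)) => G i) i
          (Finset.mem_range.2 (lt_of_lt_of_le (Finset.mem_range.1 hi) (by omega)))
    have hint : (⋂ k, Gs \ Gk k) = ∅ := by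
      ext x; simp only [mem_iInter, mem_empty_iff_false, iff_false]
      intro h
      obtain ⟨i, hi⟩ := mem_iUnion.1 (h 0).1
      exact (h i).2 (mem_biUnion (Finset.mem_range.2 (Nat.lt_succ_self i)) hi)
    have h0 := MeasureTheory.tendsto_measure_iInter_atTop
      (fun k => (hGsmeas.diff (hmGk k)).nullMeasurableSet) hanti ⟨0, measure_ne_top μ _⟩
    rw [hint, measure_empty] at h0
    have := (ENNReal.tendsto_toReal (by simp : (0:ℝ≥0∞) ≠ ⊤)).comp h0
    exact this
  intro 𝒜 h𝒜 hfin ε hε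
  have hstruct : ∀ X ∈ 𝒜, ∃ A₁ ∈ B, ∃ A₂ ∈ B, X = (A₁ ∩ Gs) ∪ (A₂ \ Gs) :=
    fun X hX => genAlgebra_sub B hBuniv hBc hBu Gs (h𝒜 hX)
  -- uniform index
  have huniform : ∃ n₀ : ℕ, ∀ X ∈ 𝒜, ∃ A₁ ∈ Bn n₀, ∃ A₂ ∈ Bn n₀,
      X = (A₁ ∩ Gs) ∪ (A₂ \ Gs) := by
    have hind : ∀ 𝒜' : Set (Set Cantor), 𝒜'.Finite → 𝒜' ⊆ 𝒜 →
        ∃ n₀ : ℕ, ∀ X ∈ 𝒜', ∃ A₁ ∈ Bn n₀, ∃ A₂ ∈ Bn n₀,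
          X = (A₁ ∩ Gs) ∪ (A₂ \ Gs) := by
      intro 𝒜' h'
      refine Set.Finite.induction_on
        (motive := fun t _ => t ⊆ 𝒜 → ∃ n₀ : ℕ, ∀ X ∈ t, ∃ A₁ ∈ Bn n₀, ∃ A₂ ∈ Bn n₀,
          X = (A₁ ∩ Gs) ∪ (A₂ \ Gs)) 𝒜' h'
        (fun _ => ⟨0, fun X hX => absurd hX (notMem_empty X)⟩) ?_
      rintro a t ha ht IH hsub
      obtain ⟨n₀, hn₀⟩ := IH ((subset_insert a t).trans hsub)
      obtain ⟨A₁, hA₁, A₂, hA₂, he⟩ := hstruct a (hsub (mem_insert a t))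
      rw [hBunion] at hA₁ hA₂
      obtain ⟨n₁, h1⟩ := mem_iUnion.1 hA₁
      obtain ⟨n₂, h2⟩ := mem_iUnion.1 hA₂
      refine ⟨max n₀ (max n₁ n₂), ?_⟩
      rintro X (rfl | hX)
      · exact ⟨A₁, hBn_mono ((le_max_left _ _).trans (le_max_right _ _)) h1,
          A₂, hBn_mono ((le_max_right _ _).trans (le_max_right _ _)) h2, he⟩
      · obtain ⟨B₁, hB₁, B₂, hB₂, he'⟩ := hn₀ X hX
        exact ⟨B₁, hBn_mono (le_max_left _ _) hB₁, B₂, hBn_mono (le_max_left _ _) hB₂, he'⟩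
    exact hind 𝒜 hfin subset_rfl
  obtain ⟨n₀, hn₀⟩ := huniform
  obtain ⟨N₁, hN₁⟩ : ∃ n : ℕ, ((2:ℝ)⁻¹) ^ n < ε / 2 :=
    exists_pow_lt_of_lt_one (by linarith) (by norm_num)
  set N := max (max n₀ N₁) 1 with hNdef
  have hN1 : 1 ≤ N := le_max_right _ _
  have hNn₀ : n₀ ≤ N := (le_max_left _ _).trans (le_max_left _ _)
  set η : ℝ := ((2:ℝ)⁻¹) ^ N with hηdef
  have hηpos : 0 < η := by positivity
  have hεN : 2 * η < ε := by
    have h1 : η ≤ ((2:ℝ)⁻¹) ^ N₁ :=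
      pow_le_pow_of_le_one (by norm_num) (by norm_num)
        ((le_max_right _ _).trans (le_max_left _ _))
    linarith
  have hmN1 : 1 ≤ m N := hN1.trans hm.le_apply
  have hmpos : (0:ℝ) < (m N : ℝ) := by exact_mod_cast Nat.lt_of_lt_of_le Nat.zero_lt_one hmN1
  refine ⟨m N, ?_⟩
  intro X hX
  obtain ⟨A₁, hA₁, A₂, hA₂, rfl⟩ := hn₀ X hX
  have hA₁N : A₁ ∈ Bn N := hBn_mono hNn₀ hA₁
  have hA₂N : A₂ ∈ Bn N := hBn_mono hNn₀ hA₂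
  have hA₁B : A₁ ∈ B := by rw [hBunion]; exact mem_iUnion.2 ⟨N, hA₁N⟩
  have hA₂B : A₂ ∈ B := by rw [hBunion]; exact mem_iUnion.2 ⟨N, hA₂N⟩
  have hmA₁ : MeasurableSet A₁ := hmeas _ hA₁B
  have hmA₂ : MeasurableSet A₂ := hmeas _ hA₂B
  set Xk : ℕ → Set Cantor := fun k => (A₁ ∩ Gk k) ∪ (A₂ \ Gk k) with hXkdef
  have hmX : MeasurableSet ((A₁ ∩ Gs) ∪ (A₂ \ Gs)) :=
    (hmA₁.inter hGsmeas).union (hmA₂.diff hGsmeas)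
  have hmXk : ∀ k, MeasurableSet (Xk k) :=
    fun k => (hmA₁.inter (hmGk k)).union (hmA₂.diff (hmGk k))
  have hdiff1 : ∀ k, ((A₁ ∩ Gs) ∪ (A₂ \ Gs)) \ Xk k ⊆ Gs \ Gk k := by
    intro k x hx
    obtain ⟨hx1, hx2⟩ := hx
    by_cases hg : x ∈ Gk k
    · exfalso; apply hx2
      rcases hx1 with ⟨h1, _⟩ | ⟨h2, hng⟩
      · exact Or.inl ⟨h1, hg⟩
      · exact absurd (hGkGs k hg) hng
    · refine ⟨?_, hg⟩
      rcases hx1 with ⟨_, h⟩ | ⟨h2, hng⟩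
      · exact h
      · exact absurd (Or.inr ⟨h2, hg⟩) hx2
  have hdiff2 : ∀ k, Xk k \ ((A₁ ∩ Gs) ∪ (A₂ \ Gs)) ⊆ Gs \ Gk k := by
    rintro k x ⟨hx1, hx2⟩
    rcases hx1 with ⟨h1, hg⟩ | ⟨h2, hng⟩
    · exact absurd (Or.inl ⟨h1, hGkGs k hg⟩) hx2
    · by_cases hgs : x ∈ Gs
      · exact ⟨hgs, hng⟩
      · exact absurd (Or.inr ⟨h2, hgs⟩) hx2
  intro s
  set c : ℝ := (μ (cyl s)).toReal with hcdef
  have hcpos : 0 < c := by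
    rw [hcdef, hμ (m N) s, ENNReal.toReal_pow]
    have : ((2:ℝ≥0∞)⁻¹).toReal = ((2:ℝ))⁻¹ := by
      rw [ENNReal.toReal_inv]; norm_num
    rw [this]; positivity
  have hk1 : ∀ k, N ≤ k →
      ((μ ((A₁ ∩ Gk k) ∩ cyl s)).toReal / c < η / (m N : ℝ) ∨
        (μ (cyl s \ (A₁ ∩ Gk k))).toReal / c < η / (m N : ℝ)) ∧
      ∀ r : ℕ, m N < r → |phi μ r ((A₁ ∩ Gk k) ∩ cyl s)| / c < η / (r : ℝ) :=
    fun k hk => (hkey k N hk A₁ hA₁N).1 s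
  have hk2 : ∀ k, N ≤ k →
      ((μ ((A₂ \ Gk k) ∩ cyl s)).toReal / c < η / (m N : ℝ) ∨
        (μ (cyl s \ (A₂ \ Gk k))).toReal / c < η / (m N : ℝ)) ∧
      ∀ r : ℕ, m N < r → |phi μ r ((A₂ \ Gk k) ∩ cyl s)| / c < η / (r : ℝ) :=
    fun k hk => (hkey k N hk A₂ hA₂N).2 s
  have hsub_to : ∀ {U V : Set Cantor}, U ⊆ V → (μ U).toReal ≤ (μ V).toReal :=
    fun h => ENNReal.toReal_mono (measure_ne_top μ _) (measure_mono h)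
  constructor
  · -- measure clause
    set b : ℝ := 2 * η / (m N : ℝ) * c with hbdef
    have hcases : ∀ k, N ≤ k →
        (μ (Xk k ∩ cyl s)).toReal < b ∨ (μ (cyl s \ Xk k)).toReal < b := by
      intro k hk
      obtain ⟨h1, -⟩ := hk1 k hk
      obtain ⟨h2, -⟩ := hk2 k hk
      rcases h1 with h1 | h1
      · rcases h2 with h2 | h2
        · left
          have h1' : (μ ((A₁ ∩ Gk k) ∩ cyl s)).toReal < η / (m N : ℝ) * c :=
            (div_lt_iff₀ hcpos).1 h1
          have h2' : (μ ((A₂ \ Gk k) ∩ cyl s)).toReal < η / (m N : ℝ) * c :=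
            (div_lt_iff₀ hcpos).1 h2
          have hsub : Xk k ∩ cyl s ⊆ ((A₁ ∩ Gk k) ∩ cyl s) ∪ ((A₂ \ Gk k) ∩ cyl s) := by
            rw [union_inter_distrib_right]
          have hle : (μ (Xk k ∩ cyl s)).toReal ≤
              (μ ((A₁ ∩ Gk k) ∩ cyl s)).toReal + (μ ((A₂ \ Gk k) ∩ cyl s)).toReal := by
            rw [← ENNReal.toReal_add (measure_ne_top μ _) (measure_ne_top μ _)]
            exact ENNReal.toReal_mono
              (ENNReal.add_ne_top.2 ⟨measure_ne_top μ _, measure_ne_top μ _⟩)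
              ((measure_mono hsub).trans (measure_union_le _ _))
          rw [hbdef]
          have : 2 * η / (m N : ℝ) * c = η / (m N : ℝ) * c + η / (m N : ℝ) * c := by ring
          rw [this]; linarith
        · right
          have h2' : (μ (cyl s \ (A₂ \ Gk k))).toReal < η / (m N : ℝ) * c :=
            (div_lt_iff₀ hcpos).1 h2
          have hsub : cyl s \ Xk k ⊆ cyl s \ (A₂ \ Gk k) :=
            diff_subset_diff_right subset_union_right
          have hb2 : η / (m N : ℝ) * c ≤ b := by
            have he : b = η / (m N : ℝ) * c + η / (m N : ℝ) * c := by rw [hbdef]; ring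
            have hp : 0 ≤ η / (m N : ℝ) * c := by positivity
            linarith
          exact lt_of_le_of_lt (hsub_to hsub) (lt_of_lt_of_le h2' hb2)
      · right
        have h1' : (μ (cyl s \ (A₁ ∩ Gk k))).toReal < η / (m N : ℝ) * c :=
          (div_lt_iff₀ hcpos).1 h1
        have hsub : cyl s \ Xk k ⊆ cyl s \ (A₁ ∩ Gk k) :=
          diff_subset_diff_right subset_union_left
        have hb2 : η / (m N : ℝ) * c ≤ b := by
          have he : b = η / (m N : ℝ) * c + η / (m N : ℝ) * c := by rw [hbdef]; ring
          have hp : 0 ≤ η / (m N : ℝ) * c := by positivity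
          linarith
        exact lt_of_le_of_lt (hsub_to hsub) (lt_of_lt_of_le h1' hb2)
    have hfreq : (∃ᶠ k in atTop, (μ (Xk k ∩ cyl s)).toReal < b) ∨
        (∃ᶠ k in atTop, (μ (cyl s \ Xk k)).toReal < b) := by
      rw [← frequently_or_distrib]
      exact ((eventually_ge_atTop N).mono hcases).frequently
    have hbound_div : ∀ y : ℝ, y ≤ b → y / c ≤ 2 * η / (m N : ℝ) := by
      intro y hy
      rw [div_le_iff₀ hcpos]
      exact hy.trans_eq hbdef
    have hfinal_lt : (2:ℝ) * η / (m N : ℝ) < ε / (m N : ℝ) :=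
      (div_lt_div_iff_of_pos_right hmpos).2 hεN
    rcases hfreq with hf | hf
    · left
      have hW : ∀ k, ((A₁ ∩ Gs) ∪ (A₂ \ Gs)) ∩ cyl s ⊆ (Xk k ∩ cyl s) ∪ (Gs \ Gk k) := by
        rintro k x ⟨hx, hs'⟩
        by_cases h : x ∈ Xk k
        · exact Or.inl ⟨h, hs'⟩
        · exact Or.inr (hdiff1 k ⟨hx, h⟩)
      have hle : (μ (((A₁ ∩ Gs) ∪ (A₂ \ Gs)) ∩ cyl s)).toReal ≤ b := by
        refine le_of_forall_pos_lt_add ?_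
        intro δ hδ
        have hev : ∀ᶠ k in atTop, (μ (Gs \ Gk k)).toReal < δ :=
          Tendsto.eventually_lt_const hδ htail
        obtain ⟨k, hk1', hk2'⟩ := (hf.and_eventually hev).exists
        have h3 : (μ (((A₁ ∩ Gs) ∪ (A₂ \ Gs)) ∩ cyl s)).toReal ≤
            (μ (Xk k ∩ cyl s)).toReal + (μ (Gs \ Gk k)).toReal := by
          rw [← ENNReal.toReal_add (measure_ne_top μ _) (measure_ne_top μ _)]
          exact ENNReal.toReal_mono
            (ENNReal.add_ne_top.2 ⟨measure_ne_top μ _, measure_ne_top μ _⟩)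
            ((measure_mono (hW k)).trans (measure_union_le _ _))
        linarith
      exact lt_of_le_of_lt (hbound_div _ hle) hfinal_lt
    · right
      have hW : ∀ k, cyl s \ ((A₁ ∩ Gs) ∪ (A₂ \ Gs)) ⊆ (cyl s \ Xk k) ∪ (Gs \ Gk k) := by
        rintro k x ⟨hs', hx⟩
        by_cases h : x ∈ Xk k
        · exact Or.inr (hdiff2 k ⟨h, hx⟩)
        · exact Or.inl ⟨hs', h⟩
      have hle : (μ (cyl s \ ((A₁ ∩ Gs) ∪ (A₂ \ Gs)))).toReal ≤ b := by
        refine le_of_forall_pos_lt_add ?_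
        intro δ hδ
        have hev : ∀ᶠ k in atTop, (μ (Gs \ Gk k)).toReal < δ :=
          Tendsto.eventually_lt_const hδ htail
        obtain ⟨k, hk1', hk2'⟩ := (hf.and_eventually hev).exists
        have h3 : (μ (cyl s \ ((A₁ ∩ Gs) ∪ (A₂ \ Gs)))).toReal ≤
            (μ (cyl s \ Xk k)).toReal + (μ (Gs \ Gk k)).toReal := by
          rw [← ENNReal.toReal_add (measure_ne_top μ _) (measure_ne_top μ _)]
          exact ENNReal.toReal_mono
            (ENNReal.add_ne_top.2 ⟨measure_ne_top μ _, measure_ne_top μ _⟩)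
            ((measure_mono (hW k)).trans (measure_union_le _ _))
        linarith
      exact lt_of_le_of_lt (hbound_div _ hle) hfinal_lt
  · -- phi clause
    intro r hr
    have hrpos : (0:ℝ) < (r : ℝ) := by
      have : 1 ≤ r := hmN1.trans hr.le
      exact_mod_cast Nat.lt_of_lt_of_le Nat.zero_lt_one this
    set b : ℝ := 2 * η / (r : ℝ) * c with hbdef
    have hbound : ∀ k, N ≤ k → |phi μ r (Xk k ∩ cyl s)| < b := by
      intro k hk
      have h1 := (hk1 k hk).2 r hr
      have h2 := (hk2 k hk).2 r hr
      have h1' : |phi μ r ((A₁ ∩ Gk k) ∩ cyl s)| < η / (r : ℝ) * c := (div_lt_iff₀ hcpos).1 h1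
      have h2' : |phi μ r ((A₂ \ Gk k) ∩ cyl s)| < η / (r : ℝ) * c := (div_lt_iff₀ hcpos).1 h2
      have he : Xk k ∩ cyl s = ((A₁ ∩ Gk k) ∩ cyl s) ∪ ((A₂ \ Gk k) ∩ cyl s) :=
        union_inter_distrib_right _ _ _
      have hdisj : Disjoint ((A₁ ∩ Gk k) ∩ cyl s) ((A₂ \ Gk k) ∩ cyl s) :=
        Disjoint.mono inter_subset_left inter_subset_left
          (disjoint_sdiff_self_right.mono_left inter_subset_right)
      rw [he, phi_union μ r hdisj ((hmA₂.diff (hmGk k)).inter (measurableSet_cyl s))]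
      calc |phi μ r ((A₁ ∩ Gk k) ∩ cyl s) + phi μ r ((A₂ \ Gk k) ∩ cyl s)|
          ≤ |phi μ r ((A₁ ∩ Gk k) ∩ cyl s)| + |phi μ r ((A₂ \ Gk k) ∩ cyl s)| := abs_add_le _ _
        _ < η / (r : ℝ) * c + η / (r : ℝ) * c := add_lt_add h1' h2'
        _ = b := by rw [hbdef]; ring
    have hW1 : ∀ k, |phi μ r (((A₁ ∩ Gs) ∪ (A₂ \ Gs)) ∩ cyl s) - phi μ r (Xk k ∩ cyl s)| ≤
        2 * (μ (Gs \ Gk k)).toReal := by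
      intro k
      refine (abs_phi_sub_le μ r (hmX.inter (measurableSet_cyl s))
        ((hmXk k).inter (measurableSet_cyl s))).trans ?_
      have d1 : (((A₁ ∩ Gs) ∪ (A₂ \ Gs)) ∩ cyl s) \ (Xk k ∩ cyl s) ⊆ Gs \ Gk k := by
        rintro x ⟨⟨hx, hs'⟩, hn⟩
        exact hdiff1 k ⟨hx, fun h => hn ⟨h, hs'⟩⟩
      have d2 : (Xk k ∩ cyl s) \ (((A₁ ∩ Gs) ∪ (A₂ \ Gs)) ∩ cyl s) ⊆ Gs \ Gk k := by
        rintro x ⟨⟨hx, hs'⟩, hn⟩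
        exact hdiff2 k ⟨hx, fun h => hn ⟨h, hs'⟩⟩
      have m1 := hsub_to d1
      have m2 := hsub_to d2
      linarith
    have hfinal : |phi μ r (((A₁ ∩ Gs) ∪ (A₂ \ Gs)) ∩ cyl s)| ≤ b := by
      refine le_of_forall_pos_lt_add ?_
      intro δ hδ
      have htail2 : Tendsto (fun k => 2 * (μ (Gs \ Gk k)).toReal) atTop (𝓝 0) := by
        have := htail.const_mul (2:ℝ)
        simpa using this
      have hev : ∀ᶠ k in atTop, 2 * (μ (Gs \ Gk k)).toReal < δ :=
        Tendsto.eventually_lt_const hδ htail2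
      obtain ⟨k, hkN, hkδ⟩ := ((eventually_ge_atTop N).and hev).exists
      have habs : |phi μ r (((A₁ ∩ Gs) ∪ (A₂ \ Gs)) ∩ cyl s)| ≤
          |phi μ r (Xk k ∩ cyl s)| +
          |phi μ r (((A₁ ∩ Gs) ∪ (A₂ \ Gs)) ∩ cyl s) - phi μ r (Xk k ∩ cyl s)| := by
        have := abs_add_le (phi μ r (Xk k ∩ cyl s))
          (phi μ r (((A₁ ∩ Gs) ∪ (A₂ \ Gs)) ∩ cyl s) - phi μ r (Xk k ∩ cyl s))
        simpa using this
      have h4 := hbound k hkN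
      have h5 := hW1 k
      linarith
    have h6 : |phi μ r (((A₁ ∩ Gs) ∪ (A₂ \ Gs)) ∩ cyl s)| / c ≤ 2 * η / (r : ℝ) := by
      rw [div_le_iff₀ hcpos]
      exact hfinal.trans_eq hbdef
    exact lt_of_le_of_lt h6 ((div_lt_div_iff_of_pos_right hrpos).2 hεN)
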